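/- Let ρ : (0,∞) → (0,ρ₀) be a C³ solution of ρ'' + (2/r)ρ' - (2f²/r²)ρ = λ(ρ² - ρ₀²)ρ with ρ' ≥ 0 on (0,∞), where f : (0,∞) → (0,1) is C¹ with f' < 0, and λ, ρ₀ > 0. Then ρ' > 0 on (0,∞). -/

import Mathlib

open Real Set

theorem stmt9 (lam ρ₀ : ℝ) (hlam : 0 < lam) (hρ₀ : 0 < ρ₀) (f ρ : ℝ → ℝ)
    (hρ : ContDiffOn ℝ 3 ρ (Ioi 0)) (hf : ContDiffOn ℝ 1 f (Ioi 0))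
    (hρrange : ∀ r > (0 : ℝ), 0 < ρ r ∧ ρ r < ρ₀)
    (hfrange : ∀ r > (0 : ℝ), 0 < f r ∧ f r < 1)
    (hf' : ∀ r > (0 : ℝ), deriv f r < 0)
    (hODE : ∀ r > (0 : ℝ), deriv (deriv ρ) r + (2 / r) * deriv ρ r
      - (2 * (f r) ^ 2 / r ^ 2) * ρ r = lam * ((ρ r) ^ 2 - ρ₀ ^ 2) * ρ r)
    (hρ' : ∀ r > (0 : ℝ), 0 ≤ deriv ρ r) :
    ∀ r > (0 : ℝ), 0 < deriv ρ r := by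
  intro r₂ hr₂
  by_contra hcon
  push_neg at hcon
  have h0 : deriv ρ r₂ = 0 := le_antisymm hcon (hρ' r₂ hr₂)
  have hsopen : IsOpen (Ioi (0 : ℝ)) := isOpen_Ioi
  -- differentiability facts
  have hρ'cd : ContDiffOn ℝ 2 (deriv ρ) (Ioi 0) :=
    hρ.deriv_of_isOpen hsopen (by norm_num)
  have hρd : ∀ x > (0:ℝ), HasDerivAt ρ (deriv ρ x) x := fun x hx =>
    (((hρ.differentiableOn (by norm_num)) x hx).differentiableAt
      (hsopen.mem_nhds hx)).hasDerivAt
  have hρ'd : ∀ x > (0:ℝ), HasDerivAt (deriv ρ) (deriv (deriv ρ) x) x := fun x hx =>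
    (((hρ'cd.differentiableOn (by norm_num)) x hx).differentiableAt
      (hsopen.mem_nhds hx)).hasDerivAt
  have hfd : ∀ x > (0:ℝ), HasDerivAt f (deriv f x) x := fun x hx =>
    (((hf.differentiableOn (by norm_num)) x hx).differentiableAt
      (hsopen.mem_nhds hx)).hasDerivAt
  -- ρ''(r₂) = 0 since r₂ is a local min of ρ'
  have hmin : IsLocalMin (deriv ρ) r₂ := by
    filter_upwards [hsopen.mem_nhds hr₂] with x hx
    rw [h0]; exact hρ' x hx
  have h2 : deriv (deriv ρ) r₂ = 0 := hmin.deriv_eq_zero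
  -- the coefficient function c
  set c : ℝ → ℝ := fun r => 2 * (f r) ^ 2 / r ^ 2 + lam * ((ρ r) ^ 2 - ρ₀ ^ 2) with hc_def
  have hρpos := (hρrange r₂ hr₂).1
  have hc0 : c r₂ = 0 := by
    have heq := hODE r₂ hr₂
    rw [h0, h2] at heq
    have hfac : c r₂ * ρ r₂ = 0 := by
      simp only [hc_def]; nlinarith [heq]
    rcases mul_eq_zero.mp hfac with h | h
    · exact h
    · exact absurd h (ne_of_gt hρpos)
  -- c has negative derivative at r₂
  have hr₂0 : (r₂ : ℝ) ≠ 0 := ne_of_gt hr₂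
  have hcD : HasDerivAt c
      (2 * ((2 * f r₂ ^ 1 * deriv f r₂ * r₂ ^ 2 - f r₂ ^ 2 * (2 * r₂ ^ 1)) / (r₂ ^ 2) ^ 2)
        + lam * (2 * ρ r₂ ^ 1 * deriv ρ r₂)) r₂ := by
    have h1 : HasDerivAt (fun r => (f r) ^ 2) (2 * f r₂ ^ 1 * deriv f r₂) r₂ := by
      simpa using (hfd r₂ hr₂).fun_pow 2
    have h2' : HasDerivAt (fun r : ℝ => r ^ 2) (2 * r₂ ^ 1) r₂ := by
      simpa using hasDerivAt_pow 2 r₂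
    have hdiv := h1.div h2' (pow_ne_zero 2 hr₂0)
    have hρ2 : HasDerivAt (fun r => (ρ r) ^ 2 - ρ₀ ^ 2) (2 * ρ r₂ ^ 1 * deriv ρ r₂) r₂ := by
      simpa using ((hρd r₂ hr₂).pow 2).sub_const (ρ₀ ^ 2)
    have key := (hdiv.const_mul 2).add (hρ2.const_mul lam)
    have hfun : c = fun r => 2 * ((f r) ^ 2 / r ^ 2) + lam * ((ρ r) ^ 2 - ρ₀ ^ 2) := by
      funext r; simp only [hc_def]; ring
    rw [hfun]; exact key
  have hDneg : (2 * ((2 * f r₂ ^ 1 * deriv f r₂ * r₂ ^ 2 - f r₂ ^ 2 * (2 * r₂ ^ 1)) / (r₂ ^ 2) ^ 2)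
        + lam * (2 * ρ r₂ ^ 1 * deriv ρ r₂)) < 0 := by
    rw [h0]
    have hfpos := (hfrange r₂ hr₂).1
    have hf'neg := hf' r₂ hr₂
    have hnum : 2 * f r₂ ^ 1 * deriv f r₂ * r₂ ^ 2 - f r₂ ^ 2 * (2 * r₂ ^ 1) < 0 := by
      have h1 : (0:ℝ) < f r₂ ^ 2 * (2 * r₂ ^ 1) := by positivity
      have hA : (2 * f r₂ ^ 1 * r₂ ^ 2) * deriv f r₂ < 0 :=
        mul_neg_of_pos_of_neg (by positivity) hf'neg
      nlinarith [hA, h1]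
    have hden : (0:ℝ) < (r₂ ^ 2) ^ 2 := by positivity
    have := div_neg_of_neg_of_pos hnum hden
    nlinarith
  -- hence c < 0 just to the right of r₂
  have hslope := (hasDerivAt_iff_tendsto_slope.mp hcD).eventually_lt_const hDneg
  have hslope' : ∀ᶠ x in nhdsWithin r₂ (Ioi r₂), slope c r₂ x < 0 :=
    hslope.filter_mono (nhdsWithin_mono _ fun x hx => ne_of_gt hx)
  have hcneg : ∀ᶠ x in nhdsWithin r₂ (Ioi r₂), c x < 0 := by
    filter_upwards [hslope', self_mem_nhdsWithin] with x hsl (hx : r₂ < x)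
    have hxr : 0 < x - r₂ := by linarith
    rw [slope_def_field] at hsl
    have : (c x - c r₂) / (x - r₂) < 0 := by
      simpa [div_eq_inv_mul] using hsl
    rw [hc0] at this
    have := (div_neg_iff).mp this
    rcases this with ⟨h1, h2⟩ | ⟨h1, h2⟩
    · linarith
    · linarith
  obtain ⟨b, hb, hIoo⟩ := mem_nhdsGT_iff_exists_Ioo_subset.mp hcneg
  have hbr₂ : r₂ < b := hb
  -- the function g = r² ρ'
  set g : ℝ → ℝ := fun r => r ^ 2 * deriv ρ r with hg_def
  have hgderiv : ∀ x ∈ Ioo r₂ b, HasDerivAt g (x ^ 2 * (c x * ρ x)) x := by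
    intro x hx
    have hx0 : 0 < x := lt_trans hr₂ hx.1
    have hgx : HasDerivAt g (2 * x ^ 1 * deriv ρ x + x ^ 2 * deriv (deriv ρ) x) x := by
      simpa using (hasDerivAt_pow 2 x).fun_mul (hρ'd x hx0)
    have heq := hODE x hx0
    have hxne : (x:ℝ) ≠ 0 := ne_of_gt hx0
    have heqm : x ^ 2 * (deriv (deriv ρ) x + 2 / x * deriv ρ x - 2 * f x ^ 2 / x ^ 2 * ρ x)
        = x ^ 2 * (lam * (ρ x ^ 2 - ρ₀ ^ 2) * ρ x) := by rw [heq]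
    have heq2 : x ^ 2 * deriv (deriv ρ) x + 2 * x * deriv ρ x - 2 * f x ^ 2 * ρ x
        = x ^ 2 * (lam * (ρ x ^ 2 - ρ₀ ^ 2) * ρ x) := by
      rw [← heqm]; field_simp
    have : 2 * x ^ 1 * deriv ρ x + x ^ 2 * deriv (deriv ρ) x = x ^ 2 * (c x * ρ x) := by
      simp only [hc_def]
      have hgoal : x ^ 2 * ((2 * f x ^ 2 / x ^ 2 + lam * (ρ x ^ 2 - ρ₀ ^ 2)) * ρ x)
          = 2 * f x ^ 2 * ρ x + x ^ 2 * (lam * (ρ x ^ 2 - ρ₀ ^ 2) * ρ x) := by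
        field_simp
      rw [hgoal]
      linarith [heq2]
    rwa [this] at hgx
  have hsub : Icc r₂ b ⊆ Ioi (0:ℝ) := fun x hx => lt_of_lt_of_le hr₂ hx.1
  have hgcont : ContinuousOn g (Icc r₂ b) :=
    (continuous_pow 2).continuousOn.mul ((hρ'cd.continuousOn).mono hsub)
  have hanti : StrictAntiOn g (Icc r₂ b) := by
    apply strictAntiOn_of_deriv_neg (convex_Icc r₂ b) hgcont
    intro x hx
    rw [interior_Icc] at hx
    rw [(hgderiv x hx).deriv]
    have hx0 : 0 < x := lt_trans hr₂ hx.1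
    have hcx : c x < 0 := hIoo hx
    have hρx : 0 < ρ x := (hρrange x hx0).1
    have : c x * ρ x < 0 := mul_neg_of_neg_of_pos hcx hρx
    nlinarith [sq_nonneg x, mul_pos (mul_pos hx0 hx0) (mul_pos (neg_pos.mpr hcx) hρx)]
  set m := (r₂ + b) / 2 with hm_def
  have hm1 : r₂ < m := by simp only [hm_def]; linarith
  have hm2 : m < b := by simp only [hm_def]; linarith
  have hmIcc : m ∈ Icc r₂ b := ⟨le_of_lt hm1, le_of_lt hm2⟩
  have hr₂Icc : r₂ ∈ Icc r₂ b := ⟨le_refl _, le_of_lt hbr₂⟩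
  have := hanti hr₂Icc hmIcc hm1
  have hgr₂ : g r₂ = 0 := by simp [hg_def, h0]
  have hgm : 0 ≤ g m := mul_nonneg (sq_nonneg m) (hρ' m (lt_trans hr₂ hm1))
  rw [hgr₂] at this
  linarith
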